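/- Let a, b, c, d be positive integers with e := |ad − bc| ≠ 0, and let F : ℂ* × ℂ* → ℂ* × ℂ* be the group homomorphism F(z,w) = (z^a w^b, z^c w^d). Then F is surjective and every fiber of F has exactly e elements; in particular the kernel of F has cardinality e. -/

import Mathlib

namespace MonomialTorusAux

/-- The monomial map on the torus with integer exponent matrix `[[p, q], [r, s]]`. -/
def psi (p q r s : ℤ) : ℂˣ × ℂˣ → ℂˣ × ℂˣ :=
  fun x => (x.1 ^ p * x.2 ^ q, x.1 ^ r * x.2 ^ s)

lemma psi_comp (p q r s p' q' r' s' : ℤ) (x : ℂˣ × ℂˣ) :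
    psi p q r s (psi p' q' r' s' x) =
      psi (p*p'+q*r') (p*q'+q*s') (r*p'+s*r') (r*q'+s*s') x := by
  unfold psi
  refine Prod.ext ?_ ?_
  · dsimp
    rw [mul_zpow, mul_zpow, ← zpow_mul, ← zpow_mul, ← zpow_mul, ← zpow_mul,
      mul_mul_mul_comm, ← zpow_add, ← zpow_add]
    rw [show p'*p + r'*q = p*p'+q*r' by ring, show q'*p + s'*q = p*q'+q*s' by ring]
  · dsimp
    rw [mul_zpow, mul_zpow, ← zpow_mul, ← zpow_mul, ← zpow_mul, ← zpow_mul,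
      mul_mul_mul_comm, ← zpow_add, ← zpow_add]
    rw [show p'*r + r'*s = r*p'+s*r' by ring, show q'*r + s'*s = r*q'+s*s' by ring]

lemma psi_id (x : ℂˣ × ℂˣ) : psi 1 0 0 1 x = x := by
  simp [psi]

lemma psi_mul (p q r s : ℤ) (x y : ℂˣ × ℂˣ) :
    psi p q r s (x * y) = psi p q r s x * psi p q r s y := by
  unfold psi
  refine Prod.ext ?_ ?_ <;> dsimp <;>
    rw [mul_zpow, mul_zpow, mul_mul_mul_comm]

lemma psi_one (p q r s : ℤ) : psi p q r s 1 = 1 := by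
  simp [psi]

lemma exists_pow_eq (n : ℕ) (hn : n ≠ 0) (α : ℂˣ) : ∃ β : ℂˣ, β ^ n = α := by
  obtain ⟨x, hx⟩ := IsAlgClosed.exists_pow_nat_eq (k := ℂ) (α : ℂ) (Nat.pos_of_ne_zero hn)
  have hx0 : x ≠ 0 := by
    intro h
    rw [h, zero_pow hn] at hx
    exact α.ne_zero hx.symm
  refine ⟨Units.mk0 x hx0, Units.ext ?_⟩
  simpa using hx

lemma exists_zpow_eq (t : ℤ) (ht : t ≠ 0) (α : ℂˣ) : ∃ β : ℂˣ, β ^ t = α := by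
  rcases t.natAbs_eq with h | h
  · obtain ⟨β, hβ⟩ := exists_pow_eq t.natAbs (Int.natAbs_ne_zero.2 ht) α
    exact ⟨β, by rw [h, zpow_natCast, hβ]⟩
  · obtain ⟨β, hβ⟩ := exists_pow_eq t.natAbs (Int.natAbs_ne_zero.2 ht) α
    refine ⟨β⁻¹, ?_⟩
    rw [h, zpow_neg, inv_zpow, inv_inv, zpow_natCast, hβ]

lemma zpow_natAbs_eq_one {u : ℂˣ} {t : ℤ} (h : u ^ t = 1) : u ^ (t.natAbs : ℤ) = 1 := by
  rcases t.natAbs_eq with h' | h'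
  · rw [← h']; exact h
  · rw [h', zpow_neg, inv_eq_one] at h; exact h

lemma zpow_of_natAbs_eq_one {u : ℂˣ} {t : ℤ} (h : u ^ (t.natAbs : ℤ) = 1) : u ^ t = 1 := by
  rcases t.natAbs_eq with h' | h'
  · rw [h']; exact h
  · rw [h', zpow_neg, inv_eq_one]; exact h

lemma card_zpow_eq_one (n : ℕ) (hn : n ≠ 0) :
    Nat.card {u : ℂˣ // u ^ (n : ℤ) = 1} = n := by
  have : NeZero n := ⟨hn⟩
  have hprim := Complex.isPrimitiveRoot_exp n hn
  have hcard := hprim.card_rootsOfUnity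
  have hequiv : {u : ℂˣ // u ^ (n : ℤ) = 1} ≃ {u : ℂˣ // u ∈ rootsOfUnity n ℂ} :=
    Equiv.subtypeEquivRight (fun u => by
      rw [mem_rootsOfUnity, zpow_natCast])
  calc Nat.card {u : ℂˣ // u ^ (n : ℤ) = 1}
      = Nat.card (rootsOfUnity n ℂ) := Nat.card_congr hequiv
    _ = Nat.card (rootsOfUnity n ℂ) := rfl
    _ = n := hcard

lemma finite_zpow_eq_one (n : ℕ) (hn : n ≠ 0) : Finite {u : ℂˣ // u ^ (n : ℤ) = 1} := by
  have : NeZero n := ⟨hn⟩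
  have hequiv : {u : ℂˣ // u ^ (n : ℤ) = 1} ≃ {u : ℂˣ // u ∈ rootsOfUnity n ℂ} :=
    Equiv.subtypeEquivRight (fun u => by
      rw [mem_rootsOfUnity, zpow_natCast])
  exact Finite.of_equiv _ hequiv.symm

/-- The monoid hom version of `psi`. -/
def psiHom (p q r s : ℤ) : ℂˣ × ℂˣ →* ℂˣ × ℂˣ where
  toFun := psi p q r s
  map_one' := psi_one p q r s
  map_mul' := psi_mul p q r s

/-- Cardinality of the kernel of a lower-triangular monomial map. -/
lemma card_ker_triangular (g : ℕ) (hg : g ≠ 0) (r s : ℤ) (hs : s ≠ 0) :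
    Nat.card {x : ℂˣ × ℂˣ // psi (g : ℤ) 0 r s x = 1} = g * s.natAbs := by
  set T : ℂˣ × ℂˣ →* ℂˣ × ℂˣ := psiHom (g : ℤ) 0 r s with hT
  have hmem : ∀ x : ℂˣ × ℂˣ, x ∈ T.ker ↔ psi (g : ℤ) 0 r s x = 1 := fun x =>
    T.mem_ker
  have hker_eq : ∀ x : ℂˣ × ℂˣ, psi (g : ℤ) 0 r s x = 1 ↔
      (x.1 ^ (g : ℤ) = 1 ∧ x.1 ^ r * x.2 ^ s = 1) := by
    intro x
    unfold psi
    rw [Prod.ext_iff]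
    simp
  -- finiteness of the kernel
  haveI hfin1 := finite_zpow_eq_one g hg
  haveI hfin2 := finite_zpow_eq_one (g * s.natAbs)
    (Nat.mul_ne_zero hg (Int.natAbs_ne_zero.2 hs))
  have hfinK : Finite {x : ℂˣ × ℂˣ // psi (g : ℤ) 0 r s x = 1} := by
    have hinj : Function.Injective
        (fun x : {x : ℂˣ × ℂˣ // psi (g : ℤ) 0 r s x = 1} =>
          ((⟨x.1.1, ((hker_eq x.1).1 x.2).1⟩ : {u : ℂˣ // u ^ (g : ℤ) = 1}),
           (⟨x.1.2, by
              obtain ⟨h1, h2⟩ := (hker_eq x.1).1 x.2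
              have h3 : x.1.2 ^ ((g : ℤ) * s) = 1 := by
                have : (x.1.2 ^ s) = (x.1.1 ^ r)⁻¹ := by
                  rw [eq_inv_iff_mul_eq_one, mul_comm]; exact h2
                rw [mul_comm, zpow_mul, this, ← zpow_neg, ← zpow_mul, mul_comm,
                  zpow_mul, h1, one_zpow]
              have := zpow_natAbs_eq_one h3
              simpa [Int.natAbs_mul] using this⟩ :
              {u : ℂˣ // u ^ ((g * s.natAbs : ℕ) : ℤ) = 1}))) := by
      intro x y hxy
      obtain ⟨h1, h2⟩ := Prod.ext_iff.1 hxy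
      exact Subtype.ext (Prod.ext (congrArg Subtype.val h1) (congrArg Subtype.val h2))
    exact Finite.of_injective _ hinj
  have hfinT : Finite T.ker := hfinK
  -- the projection homomorphism
  set ρ : T.ker →* ℂˣ := (MonoidHom.fst ℂˣ ℂˣ).comp T.ker.subtype with hρ
  -- range of ρ
  have hrange : ∀ z : ℂˣ, z ∈ ρ.range ↔ z ^ (g : ℤ) = 1 := by
    intro z
    constructor
    · rintro ⟨x, rfl⟩
      exact ((hker_eq x.1).1 ((hmem x.1).1 x.2)).1
    · intro hz
      obtain ⟨w, hw⟩ := exists_zpow_eq s hs (z ^ (-r))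
      refine ⟨⟨(z, w), (hker_eq (z, w)).2 ⟨hz, ?_⟩⟩, rfl⟩
      rw [hw, ← zpow_add, add_neg_cancel, zpow_zero]
  have hcard_range : Nat.card ρ.range = g := by
    have : Nat.card ρ.range = Nat.card {z : ℂˣ // z ^ (g : ℤ) = 1} :=
      Nat.card_congr (Equiv.subtypeEquivRight hrange)
    rw [this, card_zpow_eq_one g hg]
  -- kernel of ρ
  have hcard_ker : Nat.card ρ.ker = s.natAbs := by
    have heq : ρ.ker ≃ {w : ℂˣ // w ^ ((s.natAbs : ℕ) : ℤ) = 1} := by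
      refine ⟨fun x => ⟨((x.1 : ℂˣ × ℂˣ)).2, ?_⟩,
        fun w => ⟨⟨((1 : ℂˣ), w.1), ?_⟩, ?_⟩, ?_, ?_⟩
      · obtain ⟨h1, h2⟩ := (hker_eq x.1.1).1 ((hmem x.1.1).1 x.1.2)
        have hz1 : ((x.1 : ℂˣ × ℂˣ)).1 = 1 := x.2
        rw [hz1, one_zpow, one_mul] at h2
        exact zpow_natAbs_eq_one h2
      · refine (hmem ((1 : ℂˣ), w.1)).2 ((hker_eq ((1 : ℂˣ), w.1)).2 ⟨by simp, ?_⟩)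
        simp only [one_zpow, one_mul]
        exact zpow_of_natAbs_eq_one w.2
      · show ((1 : ℂˣ), w.1).1 = 1
        rfl
      · intro x
        apply Subtype.ext
        apply Subtype.ext
        have hz1 : ((x.1 : ℂˣ × ℂˣ)).1 = 1 := x.2
        exact Prod.ext hz1.symm rfl
      · intro w
        rfl
    rw [Nat.card_congr heq, card_zpow_eq_one s.natAbs (Int.natAbs_ne_zero.2 hs)]
  -- put it together
  have hmain : Nat.card T.ker = Nat.card (T.ker ⧸ ρ.ker) * Nat.card ρ.ker :=
    Subgroup.card_eq_card_quotient_mul_card_subgroup ρ.ker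
  have hquot : Nat.card (T.ker ⧸ ρ.ker) = Nat.card ρ.range :=
    Nat.card_congr (QuotientGroup.quotientKerEquivRange ρ).toEquiv
  have hfinal : Nat.card T.ker = g * s.natAbs := by
    rw [hmain, hquot, hcard_range, hcard_ker]
  rw [← hfinal]
  exact Nat.card_congr (Equiv.subtypeEquivRight (fun x => (hmem x).symm))

/-- Cardinality of the kernel of a general monomial map with nonzero determinant. -/
lemma card_ker_psi (a b c d : ℕ) (ha : 0 < a)
    (hD : (a : ℤ) * d - (b : ℤ) * c ≠ 0) :
    Nat.card {x : ℂˣ × ℂˣ // psi (a : ℤ) (b : ℤ) (c : ℤ) (d : ℤ) x = 1} =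
      ((a : ℤ) * d - (b : ℤ) * c).natAbs := by
  set aZ : ℤ := (a : ℤ)
  set bZ : ℤ := (b : ℤ)
  set cZ : ℤ := (c : ℤ)
  set dZ : ℤ := (d : ℤ)
  set D : ℤ := aZ * dZ - bZ * cZ with hDdef
  set g : ℕ := Int.gcd aZ bZ with hgdef
  have hgnat : g ≠ 0 := by
    rw [hgdef, Ne, Int.gcd_eq_zero_iff]
    rintro ⟨h1, -⟩
    exact ha.ne' (Nat.cast_eq_zero.mp h1)
  have hg0 : (g : ℤ) ≠ 0 := Nat.cast_ne_zero.2 hgnat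
  have hga : (g : ℤ) ∣ aZ := Int.gcd_dvd_left _ _
  have hgb : (g : ℤ) ∣ bZ := Int.gcd_dvd_right _ _
  set a' : ℤ := aZ / (g : ℤ) with ha'def
  set b' : ℤ := bZ / (g : ℤ) with hb'def
  have ha' : aZ = (g : ℤ) * a' := (Int.mul_ediv_cancel' hga).symm
  have hb' : bZ = (g : ℤ) * b' := (Int.mul_ediv_cancel' hgb).symm
  set u : ℤ := Int.gcdA aZ bZ with hudef
  set v : ℤ := Int.gcdB aZ bZ with hvdef
  have hbez : (g : ℤ) = aZ * u + bZ * v := Int.gcd_eq_gcd_ab aZ bZ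
  have hbez' : a' * u + b' * v = 1 := by
    have key : (g : ℤ) * (a' * u + b' * v) = (g : ℤ) * 1 := by
      have h1 : (g : ℤ) * (a' * u + b' * v) = ((g : ℤ) * a') * u + ((g : ℤ) * b') * v := by
        ring
      rw [h1, ← ha', ← hb', mul_one, ← hbez]
    exact mul_left_cancel₀ hg0 key
  set c₁ : ℤ := cZ * u + dZ * v with hc₁def
  set d₁ : ℤ := dZ * a' - cZ * b' with hd₁def
  have hgd₁ : (g : ℤ) * d₁ = D := by
    have h2 : (g : ℤ) * d₁ = dZ * ((g : ℤ) * a') - cZ * ((g : ℤ) * b') := by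
      rw [hd₁def]; ring
    rw [h2, ← ha', ← hb', hDdef]
    ring
  have hd₁0 : d₁ ≠ 0 := by
    intro h
    apply hD
    rw [← hgd₁, h, mul_zero]
  -- the unimodular change of variables
  have hVl : ∀ x, psi a' b' (-v) u (psi u (-b') v a' x) = x := by
    intro x
    rw [psi_comp]
    rw [show a' * u + b' * v = 1 from hbez',
      show a' * (-b') + b' * a' = 0 by ring,
      show (-v) * u + u * v = 0 by ring,
      show (-v) * (-b') + u * a' = 1 by rw [← hbez']; ring]
    exact psi_id x
  have hVr : ∀ x, psi u (-b') v a' (psi a' b' (-v) u x) = x := by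
    intro x
    rw [psi_comp]
    rw [show u * a' + (-b') * (-v) = 1 by rw [← hbez']; ring,
      show u * b' + (-b') * u = 0 by ring,
      show v * a' + a' * (-v) = 0 by ring,
      show v * b' + a' * u = 1 by rw [← hbez']; ring]
    exact psi_id x
  set eV : (ℂˣ × ℂˣ) ≃ (ℂˣ × ℂˣ) := ⟨psi u (-b') v a', psi a' b' (-v) u, hVl, hVr⟩
    with heVdef
  have hAV : ∀ x, psi aZ bZ cZ dZ (psi u (-b') v a' x) = psi (g : ℤ) 0 c₁ d₁ x := by
    intro x
    rw [psi_comp]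
    rw [show aZ * u + bZ * v = (g : ℤ) from hbez.symm,
      show aZ * (-b') + bZ * a' = 0 by rw [ha', hb']; ring,
      show cZ * u + dZ * v = c₁ from hc₁def.symm,
      show cZ * (-b') + dZ * a' = d₁ by rw [hd₁def]; ring]
  have hiff : ∀ x : ℂˣ × ℂˣ, psi (g : ℤ) 0 c₁ d₁ x = 1 ↔ psi aZ bZ cZ dZ (eV x) = 1 := by
    intro x
    have hx : eV x = psi u (-b') v a' x := by rw [heVdef]; rfl
    rw [hx, hAV]
  have hcongr : Nat.card {x : ℂˣ × ℂˣ // psi (g : ℤ) 0 c₁ d₁ x = 1} =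
      Nat.card {x : ℂˣ × ℂˣ // psi aZ bZ cZ dZ x = 1} :=
    Nat.card_congr (Equiv.subtypeEquiv eV hiff)
  rw [← hcongr, card_ker_triangular g hgnat c₁ d₁ hd₁0]
  rw [← hgd₁, Int.natAbs_mul, Int.natAbs_natCast]

end MonomialTorusAux

open MonomialTorusAux in
/-- For positive integers `a, b, c, d` with `e = |ad - bc| ≠ 0`, the
monomial map `F(z,w) = (z^a w^b, z^c w^d)` on the torus `ℂ* × ℂ*` is surjective, each of
its fibers has exactly `e` elements, and its kernel has cardinality `e`. -/
theorem monomial_map_on_torus_fibers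
    (a b c d : ℕ) (ha : 0 < a) (hb : 0 < b) (hc : 0 < c) (hd : 0 < d)
    (e : ℕ) (he : e = ((a : ℤ) * d - (b : ℤ) * c).natAbs) (hne : e ≠ 0)
    (F : ℂˣ × ℂˣ → ℂˣ × ℂˣ)
    (hF : ∀ p : ℂˣ × ℂˣ, F p = (p.1 ^ a * p.2 ^ b, p.1 ^ c * p.2 ^ d)) :
    Function.Surjective F ∧
    (∀ q : ℂˣ × ℂˣ, Nat.card (F ⁻¹' {q}) = e) ∧
    Nat.card {p : ℂˣ × ℂˣ | F p = 1} = e := by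
  set D : ℤ := (a : ℤ) * d - (b : ℤ) * c with hDdef
  have hD : D ≠ 0 := fun h => hne (by rw [he, h]; rfl)
  have hFpsi : ∀ p, F p = psi (a : ℤ) (b : ℤ) (c : ℤ) (d : ℤ) p := by
    intro p
    rw [hF]
    unfold psi
    rw [zpow_natCast, zpow_natCast, zpow_natCast, zpow_natCast]
  -- surjectivity
  have hsurj : Function.Surjective F := by
    intro q
    obtain ⟨β₁, hβ₁⟩ := exists_zpow_eq D hD q.1
    obtain ⟨β₂, hβ₂⟩ := exists_zpow_eq D hD q.2
    refine ⟨psi (d : ℤ) (-(b : ℤ)) (-(c : ℤ)) (a : ℤ) (β₁, β₂), ?_⟩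
    rw [hFpsi, psi_comp]
    rw [show (a : ℤ) * d + (b : ℤ) * (-(c : ℤ)) = D by rw [hDdef]; ring,
      show (a : ℤ) * (-(b : ℤ)) + (b : ℤ) * (a : ℤ) = 0 by ring,
      show (c : ℤ) * (d : ℤ) + (d : ℤ) * (-(c : ℤ)) = 0 by ring,
      show (c : ℤ) * (-(b : ℤ)) + (d : ℤ) * (a : ℤ) = D by rw [hDdef]; ring]
    unfold psi
    simp only [zpow_zero, mul_one, one_mul]
    exact Prod.ext hβ₁ hβ₂
  -- kernel cardinality
  have hker : Nat.card {p : ℂˣ × ℂˣ | F p = 1} = e := by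
    have hc1 : Nat.card {p : ℂˣ × ℂˣ | F p = 1} =
        Nat.card {x : ℂˣ × ℂˣ // psi (a : ℤ) (b : ℤ) (c : ℤ) (d : ℤ) x = 1} :=
      Nat.card_congr (Equiv.subtypeEquivRight (fun x => by
        rw [Set.mem_setOf_eq, hFpsi]))
    rw [hc1, card_ker_psi a b c d ha hD, he]
  refine ⟨hsurj, fun q => ?_, hker⟩
  obtain ⟨p₀, hp₀⟩ := hsurj q
  have hmul : ∀ x y, F (x * y) = F x * F y := by
    intro x y
    rw [hFpsi, hFpsi, hFpsi, psi_mul]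
  have hequiv : {p : ℂˣ × ℂˣ // p ∈ {p | F p = 1}} ≃ (F ⁻¹' {q}) :=
    Equiv.subtypeEquiv (Equiv.mulLeft p₀) (fun x => by
      simp only [Set.mem_setOf_eq, Set.mem_preimage, Set.mem_singleton_iff,
        Equiv.coe_mulLeft, hmul, hp₀]
      constructor
      · intro h; rw [h, mul_one]
      · intro h; exact mul_left_cancel (by rw [mul_one, h]))
  rw [← Nat.card_congr hequiv, hker]
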